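/- arXiv:math/0702858 — 3 statements merged into one kernel-verified Lean document; each statement's English description precedes it below -/
import Mathlib

section
/- Let A, B, C, D : ℕ → ℕ be finitely supported sequences. For a finitely supported sequence X let l(X) be the least natural number such that X n = 0 for all n ≥ l(X), and define the concatenation X ⌢ Y by (X ⌢ Y)(n) = X(n) for n < l(X) and (X ⌢ Y)(n) = Y(n − l(X)) for n ≥ l(X). Then, writing ⊕ for pointwise addition, one has ((A ⊕ B) ⌢ (C ⊕ D)) ≤ ((A ⌢ C) ⊕ (B ⌢ D)) in the lexicographic order on finitely supported sequences. -/
/-- A sequence is finitely supported if it is eventually zero. -/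
def FinSupported (A : ℕ → ℕ) : Prop :=
  ∃ N, ∀ n, N ≤ n → A n = 0

/-- The lexicographic order on sequences: `A ≤ B` iff `A = B` or at the smallest index
where they differ, the entry of `A` is smaller. -/
def LexLe (A B : ℕ → ℕ) : Prop :=
  A = B ∨ ∃ n, (∀ m, m < n → A m = B m) ∧ A n < B n

/-- The length of a finitely supported sequence: the least `N` such that `X n = 0`
for all `n ≥ N`. -/
noncomputable def len (X : ℕ → ℕ) : ℕ :=
  sInf {N | ∀ n, N ≤ n → X n = 0}

/-- Concatenation of sequences: `X` followed by `Y`. -/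
noncomputable def concat (X Y : ℕ → ℕ) : ℕ → ℕ :=
  fun n => if n < len X then X n else Y (n - len X)

lemma len_spec {X : ℕ → ℕ} (hX : FinSupported X) {n : ℕ} (h : len X ≤ n) : X n = 0 :=
  Nat.sInf_mem hX n h

lemma finSupported_add {A B : ℕ → ℕ} (hA : FinSupported A) (hB : FinSupported B) :
    FinSupported (A + B) := by
  obtain ⟨N, hN⟩ := hA; obtain ⟨M, hM⟩ := hB
  exact ⟨max N M, fun n hn => by simp [Pi.add_apply, hN n (by omega), hM n (by omega)]⟩

lemma len_add {A B : ℕ → ℕ} (hA : FinSupported A) (hB : FinSupported B) :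
    len (A + B) = max (len A) (len B) := by
  apply le_antisymm
  · apply Nat.sInf_le
    intro n hn
    have h1 := len_spec hA (le_trans (le_max_left _ _) hn)
    have h2 := len_spec hB (le_trans (le_max_right _ _) hn)
    simp [Pi.add_apply, h1, h2]
  · have hAB := finSupported_add hA hB
    have hz : ∀ n, len (A + B) ≤ n → A n = 0 ∧ B n = 0 := by
      intro n hn
      have := len_spec hAB hn
      simp only [Pi.add_apply] at this
      omega
    exact max_le (Nat.sInf_le fun n hn => (hz n hn).1) (Nat.sInf_le fun n hn => (hz n hn).2)

lemma key (A B C D : ℕ → ℕ)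
    (hA : FinSupported A) (hB : FinSupported B) (hle : len A ≤ len B) :
    LexLe (concat (A + B) (C + D)) (concat A C + concat B D) := by
  set lA := len A with hlA
  set lB := len B with hlB
  have hlen : len (A + B) = lB := by rw [len_add hA hB]; omega
  have LHSdef : ∀ n, concat (A + B) (C + D) n
      = if n < lB then A n + B n else C (n - lB) + D (n - lB) := by
    intro n; simp only [concat, hlen, Pi.add_apply]
  have RHSdef : ∀ n, (concat A C + concat B D) n
      = (if n < lA then A n else C (n - lA)) + (if n < lB then B n else D (n - lB)) := by
    intro n; simp only [concat, Pi.add_apply, ← hlA, ← hlB]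
  by_cases hEx : ∃ m, m < lB - lA ∧ C m ≠ 0
  · have hm0 := Nat.find_spec hEx
    have hm1 : Nat.find hEx < lB - lA := hm0.1
    right
    refine ⟨lA + Nat.find hEx, ?_, ?_⟩
    · intro k hk
      rw [LHSdef, RHSdef]
      by_cases h1 : k < lA
      · rw [if_pos (by omega), if_pos h1, if_pos (by omega)]
      · have hkB : k < lB := by omega
        rw [if_pos hkB, if_neg h1, if_pos hkB]
        have hAk : A k = 0 := len_spec hA (by omega)
        have hCk : C (k - lA) = 0 := by
          have := Nat.find_min hEx (m := k - lA) (by omega)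
          push_neg at this
          exact this (by omega)
        omega
    · rw [LHSdef, RHSdef]
      have h1 : lA + Nat.find hEx < lB := by omega
      rw [if_pos h1, if_neg (by omega), if_pos h1]
      have hAk : A (lA + Nat.find hEx) = 0 := len_spec hA (by omega)
      have hCk : C (lA + Nat.find hEx - lA) ≠ 0 := by
        have : lA + Nat.find hEx - lA = Nat.find hEx := by omega
        rw [this]; exact hm0.2
      omega
  · push_neg at hEx
    by_cases hCz : ∃ j, C j ≠ 0
    · by_cases hd : lA = lB
      · left; funext n; rw [LHSdef, RHSdef]
        by_cases h1 : n < lB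
        · rw [if_pos h1, if_pos (by omega), if_pos h1]
        · rw [if_neg h1, if_neg (by omega), if_neg h1, hd]
      · have hj0 := Nat.find_spec hCz
        have hj0d : lB - lA ≤ Nat.find hCz := by
          by_contra h
          exact hj0 (hEx (Nat.find hCz) (by omega))
        right
        refine ⟨lB + (Nat.find hCz - (lB - lA)), ?_, ?_⟩
        · intro k hk
          rw [LHSdef, RHSdef]
          by_cases h1 : k < lA
          · rw [if_pos (by omega), if_pos h1, if_pos (by omega)]
          · by_cases h2 : k < lB
            · rw [if_pos h2, if_neg h1, if_pos h2]
              have hAk : A k = 0 := len_spec hA (by omega)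
              have hCk : C (k - lA) = 0 := hEx _ (by omega)
              omega
            · rw [if_neg h2, if_neg h1, if_neg h2]
              have hc1 : C (k - lB) = 0 := by
                have := Nat.find_min hCz (m := k - lB) (by omega)
                simpa using this
              have hc2 : C (k - lA) = 0 := by
                have := Nat.find_min hCz (m := k - lA) (by omega)
                simpa using this
              omega
        · rw [LHSdef, RHSdef]
          rw [if_neg (by omega), if_neg (by omega), if_neg (by omega)]
          have hc1 : C (lB + (Nat.find hCz - (lB - lA)) - lB) = 0 := by
            have := Nat.find_min hCz (m := lB + (Nat.find hCz - (lB - lA)) - lB) (by omega)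
            simpa using this
          have hc2 : lB + (Nat.find hCz - (lB - lA)) - lA = Nat.find hCz := by omega
          rw [hc2]
          have : C (Nat.find hCz) ≠ 0 := hj0
          omega
    · push_neg at hCz
      left; funext n; rw [LHSdef, RHSdef]
      by_cases h1 : n < lA
      · rw [if_pos (by omega), if_pos h1, if_pos (by omega)]
      · by_cases h2 : n < lB
        · rw [if_pos h2, if_neg h1, if_pos h2]
          have hAn : A n = 0 := len_spec hA (by omega)
          have := hCz (n - lA)
          omega
        · rw [if_neg h2, if_neg h1, if_neg h2]
          have := hCz (n - lB)
          have := hCz (n - lA)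
          omega

/-- the interchange inequality between concatenation and pointwise addition:
`(A ⊕ B) ⌢ (C ⊕ D) ≤ (A ⌢ C) ⊕ (B ⌢ D)` lexicographically. -/
theorem concat_add_interchange (A B C D : ℕ → ℕ)
    (hA : FinSupported A) (hB : FinSupported B) (hC : FinSupported C) (hD : FinSupported D) :
    LexLe (concat (A + B) (C + D)) (concat A C + concat B D) := by
  rcases le_total (len A) (len B) with h | h
  · exact key A B C D hA hB h
  · have := key B A D C hB hA h
    rwa [add_comm B A, add_comm D C, add_comm (concat B D) (concat A C)] at this
end

section
/- Let A, B, C, D : ℕ → ℕ be finitely supported nonincreasing sequences with A ≤ B and C ≤ D in the lexicographic order. Then merge(A, C) ≤ merge(B, D) in the lexicographic order. -/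
/-- The multiset of nonzero values (with multiplicity) of a finitely supported sequence. -/
noncomputable def vals (A : ℕ → ℕ) : Multiset ℕ :=
  Multiset.filter (fun x => x ≠ 0) (((List.range (len A)).map A : List ℕ) : Multiset ℕ)

/-- Merge of two finitely supported sequences: the nonincreasing finitely supported
sequence whose multiset of nonzero values is the multiset sum of those of `A` and `B`
(concatenate and sort into nonincreasing order). -/
noncomputable def merge (A B : ℕ → ℕ) : ℕ → ℕ :=
  fun n => (((vals A + vals B).sort (· ≤ ·)).reverse).getD n 0

/-! ### Auxiliary machinery -/

/-- The number of entries of `X` that are greater than `v` (the conjugate partition). -/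
noncomputable def cnt (X : ℕ → ℕ) (v : ℕ) : ℕ :=
  Multiset.countP (fun x => v < x) (vals X)

lemma lt_sInf_iff_aux {X : ℕ → ℕ} (hX' : Antitone X) (hX : FinSupported X) (v n : ℕ) :
    n < sInf {k | X k ≤ v} ↔ v < X n := by
  obtain ⟨N, hN⟩ := hX
  have hne : {k | X k ≤ v}.Nonempty := ⟨N, by simp [Set.mem_setOf_eq, hN N le_rfl]⟩
  constructor
  · intro h
    by_contra hc
    push_neg at hc
    have hc' : n ∈ {k | X k ≤ v} := hc
    have := Nat.sInf_le hc'
    omega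
  · intro h
    by_contra hc
    push_neg at hc
    have hmem := Nat.sInf_mem hne
    exact absurd (le_trans (hX' hc) hmem) (not_le.mpr h)

lemma len_zero {X : ℕ → ℕ} (hX : FinSupported X) : ∀ n, len X ≤ n → X n = 0 :=
  Nat.sInf_mem hX

lemma cnt_eq {X : ℕ → ℕ} (hX' : Antitone X) (hX : FinSupported X) (v : ℕ) :
    cnt X v = sInf {k | X k ≤ v} := by
  classical
  unfold cnt vals
  rw [Multiset.countP_filter]
  have h1 : Multiset.countP (fun a => v < a ∧ a ≠ 0)
      (((List.range (len X)).map X : List ℕ) : Multiset ℕ)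
      = Multiset.countP (fun a => v < a)
      (((List.range (len X)).map X : List ℕ) : Multiset ℕ) := by
    apply Multiset.countP_congr rfl
    intro x _
    simp only [eq_iff_iff]
    constructor
    · exact fun h => h.1
    · exact fun h => ⟨h, by omega⟩
  rw [h1]
  have h2 : (((List.range (len X)).map X : List ℕ) : Multiset ℕ)
      = Multiset.map X ((List.range (len X) : List ℕ) : Multiset ℕ) := by
    simp
  rw [h2, Multiset.countP_map]
  set m := sInf {k | X k ≤ v} with hm
  have hfilter : Multiset.filter (fun a => v < X a)
      ((List.range (len X) : List ℕ) : Multiset ℕ)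
      = ((List.range m : List ℕ) : Multiset ℕ) := by
    have hnd1 : (Multiset.filter (fun a => v < X a)
        ((List.range (len X) : List ℕ) : Multiset ℕ)).Nodup :=
      Multiset.Nodup.filter _ (by simpa using List.nodup_range (n := len X))
    have hnd2 : ((List.range m : List ℕ) : Multiset ℕ).Nodup := by
      simpa using List.nodup_range (n := m)
    refine Multiset.Nodup.ext hnd1 hnd2 |>.mpr ?_
    intro a
    simp only [Multiset.mem_filter, Multiset.mem_coe, List.mem_range]
    constructor
    · rintro ⟨_, ha⟩
      exact (lt_sInf_iff_aux hX' hX v a).mpr ha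
    · intro ha
      have hva := (lt_sInf_iff_aux hX' hX v a).mp ha
      refine ⟨?_, hva⟩
      by_contra hc
      push_neg at hc
      have := len_zero hX a hc
      omega
  rw [hfilter]
  simp

lemma lt_cnt_iff {X : ℕ → ℕ} (hX' : Antitone X) (hX : FinSupported X) (v n : ℕ) :
    n < cnt X v ↔ v < X n := by
  rw [cnt_eq hX' hX]
  exact lt_sInf_iff_aux hX' hX v n

lemma len_getD (l : List ℕ) (hl : ∀ x ∈ l, x ≠ 0) :
    len (fun n => l.getD n 0) = l.length := by
  have hmem : l.length ∈ {N | ∀ n, N ≤ n → (fun n => l.getD n 0) n = 0} := by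
    intro n hn
    exact List.getD_eq_default l 0 hn
  apply le_antisymm
  · exact Nat.sInf_le hmem
  · apply le_csInf ⟨l.length, hmem⟩
    intro b hb
    by_contra hc
    push_neg at hc
    have h0 : l.getD b 0 = 0 := hb b le_rfl
    rw [List.getD_eq_getElem l 0 hc] at h0
    exact hl _ (List.getElem_mem _) h0

lemma vals_getD (l : List ℕ) (hl : ∀ x ∈ l, x ≠ 0) :
    vals (fun n => l.getD n 0) = (l : Multiset ℕ) := by
  unfold vals
  rw [len_getD l hl]
  have hmap : (List.range l.length).map (fun n => l.getD n 0) = l := by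
    apply List.ext_getElem
    · simp
    · intro i h1 h2
      simp only [List.getElem_map, List.getElem_range]
      exact List.getD_eq_getElem l 0 h2
  rw [hmap]
  rw [Multiset.filter_eq_self.mpr]
  intro x hx
  exact hl x (by simpa using hx)

lemma mem_sortrev_ne_zero (A C : ℕ → ℕ) :
    ∀ x ∈ ((vals A + vals C).sort (· ≤ ·)).reverse, x ≠ 0 := by
  intro x hx
  rw [List.mem_reverse, Multiset.mem_sort] at hx
  rcases Multiset.mem_add.mp hx with h | h <;>
  · unfold vals at h
    exact (Multiset.mem_filter.mp h).2

lemma vals_merge (A C : ℕ → ℕ) : vals (merge A C) = vals A + vals C := by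
  have h := vals_getD _ (mem_sortrev_ne_zero A C)
  show vals (fun n => (((vals A + vals C).sort (· ≤ ·)).reverse).getD n 0) = _
  rw [h, Multiset.coe_reverse, Multiset.sort_eq]

lemma cnt_merge (A C : ℕ → ℕ) (v : ℕ) : cnt (merge A C) v = cnt A v + cnt C v := by
  unfold cnt
  rw [vals_merge, Multiset.countP_add]

lemma merge_finSupported (A C : ℕ → ℕ) : FinSupported (merge A C) :=
  ⟨(((vals A + vals C).sort (· ≤ ·)).reverse).length,
    fun _ hn => List.getD_eq_default _ _ hn⟩

lemma merge_antitone (A C : ℕ → ℕ) : Antitone (merge A C) := by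
  intro m n hmn
  show (((vals A + vals C).sort (· ≤ ·)).reverse).getD n 0
      ≤ (((vals A + vals C).sort (· ≤ ·)).reverse).getD m 0
  set l := ((vals A + vals C).sort (· ≤ ·)).reverse with hl
  rcases lt_or_ge n l.length with h | h
  · have hm : m < l.length := lt_of_le_of_lt hmn h
    rw [List.getD_eq_getElem l 0 h, List.getD_eq_getElem l 0 hm]
    rcases eq_or_lt_of_le hmn with rfl | hlt
    · exact le_rfl
    · have hs : l.Pairwise (fun a b => b ≤ a) := by
        rw [hl]
        rw [List.pairwise_reverse]
        exact (Multiset.pairwise_sort _ _)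
      exact List.pairwise_iff_getElem.mp hs m n hm h hlt
  · rw [List.getD_eq_default _ _ h]
    exact Nat.zero_le _

lemma lexLt_total (X Y : ℕ → ℕ) :
    X = Y ∨ (∃ n, (∀ m, m < n → X m = Y m) ∧ X n < Y n)
      ∨ (∃ n, (∀ m, m < n → Y m = X m) ∧ Y n < X n) := by
  classical
  by_cases h : X = Y
  · exact Or.inl h
  · have hne : ∃ n, X n ≠ Y n := by
      by_contra hc
      push_neg at hc
      exact h (funext hc)
    have h1 : X (Nat.find hne) ≠ Y (Nat.find hne) := Nat.find_spec hne
    have h2 : ∀ m, m < Nat.find hne → X m = Y m := fun m hm => by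
      by_contra hc
      exact Nat.find_min hne hm hc
    rcases lt_or_gt_of_ne h1 with hlt | hlt
    · exact Or.inr (Or.inl ⟨_, h2, hlt⟩)
    · exact Or.inr (Or.inr ⟨_, fun m hm => (h2 m hm).symm, hlt⟩)

/-- Strict "top lexicographic" order: equal above some index, strictly smaller there. -/
def TLt (f g : ℕ → ℕ) : Prop := ∃ v, (∀ u, v < u → f u = g u) ∧ f v < g v

lemma tlt_asymm {f g : ℕ → ℕ} (h1 : TLt f g) (h2 : TLt g f) : False := by
  obtain ⟨v1, hv1, hlt1⟩ := h1
  obtain ⟨v2, hv2, hlt2⟩ := h2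
  rcases lt_trichotomy v1 v2 with h | rfl | h
  · have := hv1 v2 h; omega
  · omega
  · have := hv2 v1 h; omega

lemma tle_add {f g h k : ℕ → ℕ} (h1 : f = g ∨ TLt f g) (h2 : h = k ∨ TLt h k) :
    (fun v => f v + h v) = (fun v => g v + k v)
      ∨ TLt (fun v => f v + h v) (fun v => g v + k v) := by
  rcases h1 with rfl | ⟨v1, hv1, hlt1⟩
  · rcases h2 with rfl | ⟨v2, hv2, hlt2⟩
    · exact Or.inl rfl
    · refine Or.inr ⟨v2, fun u hu => ?_, ?_⟩
      · show f u + h u = f u + k u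
        rw [hv2 u hu]
      · show f v2 + h v2 < f v2 + k v2
        omega
  · rcases h2 with rfl | ⟨v2, hv2, hlt2⟩
    · refine Or.inr ⟨v1, fun u hu => ?_, ?_⟩
      · show f u + h u = g u + h u
        rw [hv1 u hu]
      · show f v1 + h v1 < g v1 + h v1
        omega
    · rcases lt_trichotomy v1 v2 with hv | rfl | hv
      · refine Or.inr ⟨v2, fun u hu => ?_, ?_⟩
        · show f u + h u = g u + k u
          rw [hv1 u (hv.trans hu), hv2 u hu]
        · show f v2 + h v2 < g v2 + k v2
          have := hv1 v2 hv
          omega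
      · refine Or.inr ⟨v1, fun u hu => ?_, ?_⟩
        · show f u + h u = g u + k u
          rw [hv1 u hu, hv2 u hu]
        · show f v1 + h v1 < g v1 + k v1
          omega
      · refine Or.inr ⟨v1, fun u hu => ?_, ?_⟩
        · show f u + h u = g u + k u
          rw [hv1 u hu, hv2 u (hv.trans hu)]
        · show f v1 + h v1 < g v1 + k v1
          have := hv2 v1 hv
          omega

lemma tlt_cnt {X Y : ℕ → ℕ} (hX' : Antitone X) (hX : FinSupported X)
    (hY' : Antitone Y) (hY : FinSupported Y)
    (h : ∃ n, (∀ m, m < n → X m = Y m) ∧ X n < Y n) :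
    TLt (fun v => cnt X v) (fun v => cnt Y v) := by
  obtain ⟨n, hpre, hn⟩ := h
  refine ⟨Y n - 1, ?_, ?_⟩
  · intro u hu
    have hu' : Y n ≤ u := by omega
    show cnt X u = cnt Y u
    apply eq_of_forall_lt_iff
    intro k
    rw [lt_cnt_iff hX' hX, lt_cnt_iff hY' hY]
    constructor
    · intro hk
      have hkn : k < n := by
        by_contra hc
        push_neg at hc
        have := hX' hc
        omega
      rw [hpre k hkn] at hk
      exact hk
    · intro hk
      have hkn : k < n := by
        by_contra hc
        push_neg at hc
        have := hY' hc
        omega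
      rw [hpre k hkn]
      exact hk
  · show cnt X (Y n - 1) < cnt Y (Y n - 1)
    have h1 : n < cnt Y (Y n - 1) := (lt_cnt_iff hY' hY _ n).mpr (by omega)
    have h2 : ¬ n < cnt X (Y n - 1) := by
      rw [lt_cnt_iff hX' hX]
      omega
    omega

/-- merging is monotone for the lexicographic order on finitely supported
nonincreasing sequences: `A ≤ B` and `C ≤ D` imply `merge A C ≤ merge B D`. -/
theorem merge_mono (A B C D : ℕ → ℕ)
    (hA : FinSupported A) (hB : FinSupported B) (hC : FinSupported C) (hD : FinSupported D)
    (hA' : Antitone A) (hB' : Antitone B) (hC' : Antitone C) (hD' : Antitone D)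
    (hAB : LexLe A B) (hCD : LexLe C D) :
    LexLe (merge A C) (merge B D) := by
  have hMAC := merge_antitone A C
  have hMBD := merge_antitone B D
  have hFAC := merge_finSupported A C
  have hFBD := merge_finSupported B D
  have h1 : (fun v => cnt A v) = (fun v => cnt B v)
      ∨ TLt (fun v => cnt A v) (fun v => cnt B v) := by
    rcases hAB with rfl | h
    · exact Or.inl rfl
    · exact Or.inr (tlt_cnt hA' hA hB' hB h)
  have h2 : (fun v => cnt C v) = (fun v => cnt D v)
      ∨ TLt (fun v => cnt C v) (fun v => cnt D v) := by
    rcases hCD with rfl | h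
    · exact Or.inl rfl
    · exact Or.inr (tlt_cnt hC' hC hD' hD h)
  have h3 := tle_add h1 h2
  have hac : (fun v => cnt (merge A C) v) = fun v => cnt A v + cnt C v :=
    funext (cnt_merge A C)
  have hbd : (fun v => cnt (merge B D) v) = fun v => cnt B v + cnt D v :=
    funext (cnt_merge B D)
  rw [← hac, ← hbd] at h3
  rcases lexLt_total (merge A C) (merge B D) with he | hlt | hgt
  · exact Or.inl he
  · exact Or.inr hlt
  · exfalso
    have hT := tlt_cnt hMBD hFBD hMAC hFAC hgt
    rcases h3 with he | hT'
    · obtain ⟨v, _, hlt⟩ := hT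
      have hlt' : cnt (merge B D) v < cnt (merge A C) v := hlt
      have heq : cnt (merge A C) v = cnt (merge B D) v := congrFun he v
      omega
    · exact tlt_asymm hT' hT
end

section
/- For n ≥ 1 define the finitely supported sequence Y(n) : ℕ → ℕ by Y(n)(k) = ⌊(2n + 2^k − 1) / 2^(k+1)⌋ for k ≥ 1 (that is, n/2^k rounded to the nearest integer with halves rounded down) and Y(n)(0) arranged so that Y(n) lists the column heights starting at index 1; equivalently Y(n) is the nonincreasing sequence (Round(n/2), Round(n/4), Round(n/8), …). Then Y(1) is the zero sequence, Y(2) is the sequence (1, 0, 0, …), and for every n ≥ 3, Y(n) equals the lexicographic maximum, over all m with 2 ≤ m ≤ n−1 and all lists of positive integers j_1, …, j_m with j_1 + ⋯ + j_m = n, of merge(Y(m), Y(j_1) ⊕ ⋯ ⊕ Y(j_m)). In particular merge(Y(m), Y(j_1) ⊕ ⋯ ⊕ Y(j_m)) ≤ Y(n) lexicographically for every such composition. -/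
/-- `Y n` is the nonincreasing sequence `(Round(n/2), Round(n/4), Round(n/8), …)` of
column heights, with halves rounded down: the entry at (0-based) index `k` is
`n / 2^(k+1)` rounded to the nearest integer with halves rounded down. -/
def Y (n : ℕ) : ℕ → ℕ :=
  fun k => (2 * n + 2 ^ (k + 1) - 1) / 2 ^ (k + 2)

/-! ### Auxiliary arithmetic: ceiling division by powers of two -/

/-- ceiling division by `2^i` -/
def cdiv (z i : ℕ) : ℕ := (z + 2^i - 1) / 2^i

lemma pow_pos2 (i : ℕ) : 0 < 2^i := Nat.pow_pos (by norm_num)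

lemma cdiv_le_iff {z i t : ℕ} : cdiv z i ≤ t ↔ z ≤ 2^i * t := by
  unfold cdiv
  rw [Nat.div_le_iff_le_mul_add_pred (pow_pos2 i)]
  have := pow_pos2 i
  omega

lemma le_cdiv (z i : ℕ) : z ≤ 2^i * cdiv z i := cdiv_le_iff.mp le_rfl

lemma cdiv_le_self (z i : ℕ) : cdiv z i ≤ z := by
  rw [cdiv_le_iff]
  have := pow_pos2 i
  nlinarith

lemma cdiv_mono {z w : ℕ} (i : ℕ) (h : z ≤ w) : cdiv z i ≤ cdiv w i :=
  Nat.div_le_div_right (by omega)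

lemma cdiv_add_le (x y i : ℕ) : cdiv (x + y) i ≤ cdiv x i + cdiv y i := by
  rw [cdiv_le_iff, Nat.mul_add]
  exact Nat.add_le_add (le_cdiv x i) (le_cdiv y i)

lemma one_le_cdiv {z : ℕ} (i : ℕ) (h : 1 ≤ z) : 1 ≤ cdiv z i := by
  by_contra hc
  push_neg at hc
  interval_cases h' : cdiv z i
  · have := cdiv_le_iff.mp h'.le
    omega

lemma cdiv_lipschitz (x d a : ℕ) : cdiv (x + d) a ≤ cdiv x a + d := by
  rw [cdiv_le_iff, Nat.mul_add]
  have h1 := le_cdiv x a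
  have h2 : d ≤ 2^a * d := Nat.le_mul_of_pos_left d (pow_pos2 a)
  omega

lemma cdiv_mul_pow (K a b : ℕ) : cdiv (K * 2^b) (a+b) = cdiv K a := by
  unfold cdiv
  have hb := pow_pos2 b
  have ha := pow_pos2 a
  have hab : 2^b ≤ 2^a * 2^b := Nat.le_mul_of_pos_left _ ha
  have e1 : (K + 2^a - 1) * 2^b = K * 2^b + 2^a * 2^b - 2^b := by
    rw [Nat.sub_mul, Nat.add_mul]; omega
  have : K * 2^b + 2^(a+b) - 1 = (K + 2^a - 1) * 2^b + (2^b - 1) := by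
    rw [e1, pow_add]; omega
  rw [this, pow_add, mul_comm (2^a) (2^b), ← Nat.div_div_eq_div_mul]
  congr 1
  rw [mul_comm (K + 2^a - 1) (2^b), Nat.mul_add_div hb, Nat.div_eq_of_lt (by omega)]; omega

lemma cdiv_comp_le (n a b : ℕ) : cdiv n (a+b) ≤ cdiv (cdiv n b) a := by
  calc cdiv n (a+b) ≤ cdiv (cdiv n b * 2^b) (a+b) := by
        apply cdiv_mono; rw [mul_comm]; exact le_cdiv n b
    _ = cdiv (cdiv n b) a := cdiv_mul_pow _ _ _

lemma cdiv_list_le (L : List ℕ) (b : ℕ) :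
    cdiv L.sum b ≤ (L.map (fun j => cdiv j b)).sum := by
  induction L with
  | nil =>
      have hb := pow_pos2 b
      simp only [List.map_nil, List.sum_nil, cdiv, Nat.zero_add]
      rw [Nat.div_eq_of_lt (by omega)]
  | cons x xs ih =>
      simp only [List.sum_cons, List.map_cons]
      exact le_trans (cdiv_add_le x xs.sum b) (by omega)

lemma length_le_cdiv_sum (L : List ℕ) (b : ℕ) (hpos : ∀ x ∈ L, 0 < x) :
    L.length ≤ (L.map (fun j => cdiv j b)).sum := by
  induction L with
  | nil => simp
  | cons x xs ih =>
      simp only [List.map_cons, List.sum_cons, List.length_cons]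
      have h1 : 1 ≤ cdiv x b := one_le_cdiv b (hpos x (by simp))
      have h2 := ih (fun y hy => hpos y (by simp [hy]))
      omega

/-- The key arithmetic inequality behind the dominance argument. -/
lemma key_ineq (m n a b : ℕ) (L : List ℕ) (hpos : ∀ x ∈ L, 0 < x)
    (hsum : L.sum = n) (hlen : L.length = m) :
    cdiv n (a+b) + m ≤ cdiv m a + (L.map (fun j => cdiv j b)).sum := by
  have hK : cdiv n b ≤ (L.map (fun j => cdiv j b)).sum := hsum ▸ cdiv_list_le L b
  have hm : m ≤ (L.map (fun j => cdiv j b)).sum := hlen ▸ length_le_cdiv_sum L b hpos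
  have hcomp := cdiv_comp_le n a b
  rcases le_or_gt (cdiv n b) m with h | h
  · have : cdiv (cdiv n b) a ≤ cdiv m a := cdiv_mono a h
    omega
  · have : cdiv (cdiv n b) a ≤ cdiv m a + (cdiv n b - m) := by
      calc cdiv (cdiv n b) a = cdiv (m + (cdiv n b - m)) a := by congr 1; omega
        _ ≤ cdiv m a + (cdiv n b - m) := cdiv_lipschitz _ _ _
    omega

/-! ### Basic facts about `Y` -/

lemma div_eval {M t c : ℕ} (h1 : c * M ≤ t) (h2 : t < (c+1) * M) : t / M = c :=
  Nat.div_eq_of_lt_le h1 h2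

lemma odd_div {y D : ℕ} (hD : 0 < D) : (2*y+1)/(2*D) = y/D := by
  have h := Nat.div_add_mod y D
  have hlt := Nat.mod_lt y hD
  set q := y / D with hq
  set s := y % D
  have e2 : (2*D)*q = 2*(D*q) := by ring
  have : 2*y+1 = (2*D)*q + (2*s+1) := by omega
  rw [this, Nat.mul_add_div (by omega), Nat.div_eq_of_lt (by omega), Nat.add_zero]

lemma even_div (y D : ℕ) : (2*y)/(2*D) = y/D := Nat.mul_div_mul_left y D (by norm_num)

lemma Y_mono {m n : ℕ} (k : ℕ) (h : m ≤ n) : Y m k ≤ Y n k :=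
  Nat.div_le_div_right (by omega)

lemma Y_succ (n k : ℕ) : Y n (k+1) = Y ((n+1)/2) k := by
  show (2*n + 2^(k+2) - 1) / 2^(k+3) = (2*((n+1)/2) + 2^(k+1) - 1) / 2^(k+2)
  set M := 2^k with hM
  have hMpos := pow_pos2 k
  have e2 : (2:ℕ)^(k+1) = 2*M := by rw [pow_succ, mul_comm]
  have e3 : (2:ℕ)^(k+2) = 4*M := by rw [pow_succ, e2]; ring
  have e4 : (2:ℕ)^(k+3) = 8*M := by rw [pow_succ, e3]; ring
  rcases Nat.even_or_odd n with ⟨q, hq⟩ | ⟨q, hq⟩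
  · subst hq
    have h1 : (q + q + 1)/2 = q := by omega
    rw [e2, e3, e4, h1]
    have : 2*(q+q) + 4*M - 1 = 2*(2*q + 2*M - 1) + 1 := by omega
    rw [this, show 8*M = 2*(4*M) by ring, odd_div (by omega)]
  · subst hq
    have h1 : (2*q + 1 + 1)/2 = q + 1 := by omega
    rw [e2, e3, e4, h1]
    have hL : 2*(2*q+1) + 4*M - 1 = 2*(2*q + 2*M) + 1 := by omega
    have hR : 2*(q+1) + 2*M - 1 = 2*(q + M) + 1 := by omega
    rw [hL, hR, show 8*M = 2*(4*M) by ring, show 4*M = 2*(2*M) by ring,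
        odd_div (by omega), odd_div (by omega)]
    have : 2*q + 2*M = 2*(q+M) := by ring
    rw [this, even_div]

lemma Y_antitone (n k : ℕ) : Y n (k+1) ≤ Y n k := by
  rw [Y_succ]
  exact Y_mono k (by omega)

lemma Y_step (n k : ℕ) : cdiv n k = cdiv n (k+1) + Y n k := by
  show (n + 2^k - 1)/2^k = (n + 2^(k+1) - 1)/2^(k+1) + (2*n + 2^(k+1) - 1)/2^(k+2)
  set M := 2^k with hM
  have hMpos := pow_pos2 k
  have e2 : (2:ℕ)^(k+1) = 2*M := by rw [pow_succ, mul_comm]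
  have e3 : (2:ℕ)^(k+2) = 4*M := by rw [pow_succ, e2]; ring
  rw [e2, e3]
  have h := Nat.div_add_mod n (2*M)
  have hlt := Nat.mod_lt n (show 0 < 2*M by omega)
  set q := n / (2*M) with hqd
  set r := n % (2*M) with hrd
  have hn : n = 2*M*q + r := by omega
  have er1 : M*(2*q) = 2*M*q := by ring
  have er2 : (2*M)*q = 2*M*q := by ring
  have er3 : (4*M)*q = 2*(2*M*q) := by ring
  have d1 : (n + M - 1)/M = 2*q + (if r = 0 then 0 else if r ≤ M then 1 else 2) := by
    have hrw : n + M - 1 = M*(2*q) + (r + M - 1) := by omega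
    rw [hrw, Nat.mul_add_div hMpos]
    congr 1
    split_ifs with h0 h1
    · exact Nat.div_eq_of_lt (by omega)
    · exact div_eval (c := 1) (by omega) (by omega)
    · exact div_eval (c := 2) (by omega) (by omega)
  have d2 : (n + 2*M - 1)/(2*M) = q + (if r = 0 then 0 else 1) := by
    have hrw : n + 2*M - 1 = (2*M)*q + (r + 2*M - 1) := by omega
    rw [hrw, Nat.mul_add_div (by omega)]
    congr 1
    split_ifs with h0
    · exact Nat.div_eq_of_lt (by omega)
    · exact div_eval (c := 1) (by omega) (by omega)
  have d3 : (2*n + 2*M - 1)/(4*M) = q + (if r ≤ M then 0 else 1) := by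
    have hrw : 2*n + 2*M - 1 = (4*M)*q + (2*r + 2*M - 1) := by omega
    rw [hrw, Nat.mul_add_div (by omega)]
    congr 1
    split_ifs with h0
    · exact Nat.div_eq_of_lt (by omega)
    · exact div_eval (c := 1) (by omega) (by omega)
  rw [d1, d2, d3]
  split_ifs <;> omega

lemma Y_partial (n k : ℕ) : ∑ i ∈ Finset.range k, Y n i = n - cdiv n k := by
  induction k with
  | zero => simp [cdiv]
  | succ k ih =>
      rw [Finset.sum_range_succ, ih]
      have h1 := Y_step n k
      have h2 := cdiv_le_self n k
      omega

lemma Y_ev_zero {n k : ℕ} (h : n ≤ k) : Y n k = 0 := by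
  have h1 : n < 2^k := lt_of_lt_of_le Nat.lt_two_pow_self (Nat.pow_le_pow_right (by norm_num) h)
  apply Nat.div_eq_of_lt
  have e2 : (2:ℕ)^(k+1) = 2*2^k := by rw [pow_succ, mul_comm]
  have e3 : (2:ℕ)^(k+2) = 4*2^k := by rw [pow_succ, e2]; ring
  omega

lemma Y_zero_idx (n : ℕ) : Y n 0 = n / 2 := by
  show (2*n + 2^1 - 1)/2^2 = n/2
  norm_num
  omega

lemma Y_one : Y 1 = fun _ => 0 := by
  funext k
  apply Nat.div_eq_of_lt
  have e2 : (2:ℕ)^(k+2) = 2*2^(k+1) := by rw [pow_succ, mul_comm]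
  have := pow_pos2 (k+1)
  omega

lemma Y_two : Y 2 = fun k => if k = 0 then 1 else 0 := by
  funext k
  cases k with
  | zero => norm_num [Y]
  | succ j =>
      simp only [Nat.succ_ne_zero, if_neg]
      apply Nat.div_eq_of_lt
      have e2 : (2:ℕ)^(j+1+2) = 2*2^(j+1+1) := by rw [pow_succ, mul_comm]
      have h4 : (4:ℕ) ≤ 2^(j+1+1) := by
        calc (4:ℕ) = 2^2 := by norm_num
        _ ≤ 2^(j+1+1) := Nat.pow_le_pow_right (by norm_num) (by omega)
      omega

/-! ### Multiset and list machinery -/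

lemma sum_getD_take (l : List ℕ) (k : ℕ) :
    ∑ i ∈ Finset.range k, l.getD i 0 = (l.take k).sum := by
  induction k with
  | zero => simp
  | succ k ih =>
      rw [Finset.sum_range_succ, ih]
      rcases lt_or_ge k l.length with h | h
      · rw [← List.take_concat_get h, List.concat_eq_append, List.sum_append,
          List.getD_eq_getElem _ _ h]
        simp
      · rw [List.getD_eq_default _ _ h, List.take_of_length_le h,
          List.take_of_length_le (le_trans h (Nat.le_succ k))]
        omega

lemma multiset_split {T M1 M2 : Multiset ℕ} (h : T ≤ M1 + M2) :
    ∃ T1 T2, T1 ≤ M1 ∧ T2 ≤ M2 ∧ T = T1 + T2 := by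
  refine ⟨T ∩ M1, T - T ∩ M1, Multiset.inter_le_right, ?_, ?_⟩
  · rw [Multiset.le_iff_count]
    intro x
    have h1 := Multiset.le_iff_count.mp h x
    rw [Multiset.count_add] at h1
    rw [Multiset.count_sub, Multiset.count_inter]
    omega
  · rw [Multiset.le_iff_count] at *
    ext x
    have := h x
    rw [Multiset.count_add] at *
    rw [Multiset.count_sub, Multiset.count_inter]
    omega

lemma sub_range_sum (A : ℕ → ℕ) (hA : ∀ i, A (i+1) ≤ A i) :
    ∀ (N : ℕ) (T : Multiset ℕ), T ≤ (((List.range N).map A : List ℕ) : Multiset ℕ) →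
      T.sum ≤ ∑ i ∈ Finset.range T.card, A i := by
  have hanti : Antitone A := antitone_nat_of_succ_le hA
  intro N
  induction N with
  | zero => intro T hT; simp at hT; simp [hT]
  | succ N ih =>
      intro T hT
      rw [List.range_succ, List.map_append] at hT
      simp only [List.map_cons, List.map_nil] at hT
      have hT' : T ≤ (((List.range N).map A : List ℕ) : Multiset ℕ) + {A N} := by
        rw [← Multiset.coe_singleton, Multiset.coe_add]; exact hT
      obtain ⟨T1, T2, h1, h2, h3⟩ := multiset_split hT'
      have hc1 : T1.card ≤ N := by
        have := Multiset.card_le_card h1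
        simpa using this
      rcases Multiset.le_singleton.mp h2 with h2' | h2'
      · rw [h2', add_zero] at h3
        rw [h3]
        exact ih T1 h1
      · rw [h2'] at h3
        rw [h3]
        have e1 : (T1 + ({A N} : Multiset ℕ)).sum = T1.sum + A N := by simp
        have e2 : (T1 + ({A N} : Multiset ℕ)).card = T1.card + 1 := by simp
        rw [e1, e2, Finset.sum_range_succ]
        exact Nat.add_le_add (ih T1 h1) (hanti (by omega))

lemma vals_le_map (A : ℕ → ℕ) : vals A ≤ (((List.range (len A)).map A : List ℕ) : Multiset ℕ) :=
  Multiset.filter_le _ _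

lemma sum_le_partial {A : ℕ → ℕ} (hA : ∀ i, A (i+1) ≤ A i) {T : Multiset ℕ}
    (hT : T ≤ vals A) : T.sum ≤ ∑ i ∈ Finset.range T.card, A i :=
  sub_range_sum A hA (len A) T (le_trans hT (vals_le_map A))

lemma lex_of_partial_sums {A B : ℕ → ℕ}
    (h : ∀ k, ∑ i ∈ Finset.range k, A i ≤ ∑ i ∈ Finset.range k, B i) : LexLe A B := by
  by_cases heq : A = B
  · exact Or.inl heq
  · right
    have hne : {i | A i ≠ B i}.Nonempty := by
      by_contra hc
      apply heq
      funext i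
      by_contra hne
      exact hc ⟨i, hne⟩
    set k := sInf {i | A i ≠ B i} with hk
    have hmem : A k ≠ B k := Nat.sInf_mem hne
    have hbelow : ∀ m, m < k → A m = B m := by
      intro m hm
      by_contra hc
      have : k ≤ m := Nat.sInf_le (show m ∈ {i | A i ≠ B i} from hc)
      omega
    refine ⟨k, hbelow, ?_⟩
    have hs := h (k+1)
    rw [Finset.sum_range_succ, Finset.sum_range_succ] at hs
    have : ∑ i ∈ Finset.range k, A i = ∑ i ∈ Finset.range k, B i :=
      Finset.sum_congr rfl (fun i hi => hbelow i (Finset.mem_range.mp hi))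
    omega

/-! ### Pointwise sums of `Y`'s -/

lemma S_apply (L : List ℕ) (k : ℕ) : (L.map Y).sum k = (L.map (fun j => Y j k)).sum := by
  induction L with
  | nil => rfl
  | cons x xs ih => simp only [List.map_cons, List.sum_cons, Pi.add_apply, ih]

lemma S_antitone (L : List ℕ) (k : ℕ) : (L.map Y).sum (k+1) ≤ (L.map Y).sum k := by
  rw [S_apply, S_apply]
  exact List.sum_le_sum (fun j _ => Y_antitone j k)

lemma S_partial (L : List ℕ) (b : ℕ) :
    ∑ i ∈ Finset.range b, (L.map Y).sum i = (L.map (fun j => j - cdiv j b)).sum := by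
  have swap : ∀ (M : List ℕ), ∑ i ∈ Finset.range b, (M.map (fun j => Y j i)).sum
      = (M.map (fun j => ∑ i ∈ Finset.range b, Y j i)).sum := by
    intro M
    induction M with
    | nil => simp
    | cons x xs ih => simp [Finset.sum_add_distrib, ih]
  calc ∑ i ∈ Finset.range b, (L.map Y).sum i
      = ∑ i ∈ Finset.range b, (L.map (fun j => Y j i)).sum := by
        exact Finset.sum_congr rfl (fun i _ => S_apply L i)
    _ = (L.map (fun j => ∑ i ∈ Finset.range b, Y j i)).sum := swap L
    _ = (L.map (fun j => j - cdiv j b)).sum := by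
        congr 1
        exact List.map_congr_left (fun j _ => Y_partial j b)

lemma map_cdiv_sum_le (L : List ℕ) (b : ℕ) : (L.map (fun j => cdiv j b)).sum ≤ L.sum := by
  have := List.sum_le_sum (l := L) (f := fun j => cdiv j b) (g := id)
    (fun j _ => cdiv_le_self j b)
  simpa using this

lemma map_sub_sum (L : List ℕ) (b : ℕ) :
    (L.map (fun j => j - cdiv j b)).sum = L.sum - (L.map (fun j => cdiv j b)).sum := by
  induction L with
  | nil => simp
  | cons x xs ih =>
      simp only [List.map_cons, List.sum_cons, ih]
      have h1 := cdiv_le_self x b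
      have h2 := map_cdiv_sum_le xs b
      omega

/-! ### Part (a): the upper bound -/

lemma part_a (n m : ℕ) (L : List ℕ) (hpos : ∀ x ∈ L, 0 < x)
    (hsum : L.sum = n) (hlen : L.length = m) :
    LexLe (merge (Y m) (L.map Y).sum) (Y n) := by
  apply lex_of_partial_sums
  intro k
  rw [Y_partial]
  set S : ℕ → ℕ := (L.map Y).sum with hS
  set l : List ℕ := ((vals (Y m) + vals S).sort (· ≤ ·)).reverse with hl
  have e0 : ∑ i ∈ Finset.range k, merge (Y m) S i = (l.take k).sum := by
    simp only [merge]
    exact sum_getD_take l k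
  rw [e0]
  have hTle : ((l.take k : List ℕ) : Multiset ℕ) ≤ vals (Y m) + vals S := by
    calc ((l.take k : List ℕ) : Multiset ℕ) ≤ (l : Multiset ℕ) := (List.take_sublist k l).subperm
      _ = vals (Y m) + vals S := by
          rw [hl, Multiset.coe_reverse, Multiset.sort_eq]
  obtain ⟨T1, T2, h1, h2, h3⟩ := multiset_split hTle
  have hcards : T1.card + T2.card ≤ k := by
    have := congrArg Multiset.card h3
    simp only [Multiset.coe_card, List.length_take, Multiset.card_add] at this
    omega
  set a := T1.card with ha
  set b := k - a with hb
  have hab : a + b = k := by omega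
  have hsum1 : T1.sum ≤ m - cdiv m a := by
    have := sum_le_partial (Y_antitone m) h1
    rwa [Y_partial] at this
  have hsum2 : T2.sum ≤ n - (L.map (fun j => cdiv j b)).sum := by
    have step1 : T2.sum ≤ ∑ i ∈ Finset.range T2.card, S i :=
      sum_le_partial (S_antitone L) h2
    have step2 : ∑ i ∈ Finset.range T2.card, S i ≤ ∑ i ∈ Finset.range b, S i := by
      apply Finset.sum_le_sum_of_subset
      apply Finset.range_subset_range.mpr
      omega
    have step3 : ∑ i ∈ Finset.range b, S i = n - (L.map (fun j => cdiv j b)).sum := by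
      rw [hS, S_partial, map_sub_sum, hsum]
    omega
  have hsum_take : (l.take k).sum = T1.sum + T2.sum := by
    have := congrArg Multiset.sum h3
    simpa using this
  have key := key_ineq m n a b L hpos hsum hlen
  rw [hab] at key
  have b1 : cdiv m a ≤ m := cdiv_le_self m a
  have b2 : (L.map (fun j => cdiv j b)).sum ≤ n := by
    have := map_cdiv_sum_le L b
    omega
  have b3 : cdiv n k ≤ n := cdiv_le_self n k
  omega

/-! ### Part (b): the composition achieving the maximum -/

lemma len_spec_s15 (A : ℕ → ℕ) (hA : ∀ i, A (i+1) ≤ A i) (N : ℕ) (hN : ∀ k, N ≤ k → A k = 0) :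
    (∀ k, len A ≤ k → A k = 0) ∧ (∀ k, k < len A → A k ≠ 0) := by
  have hne : {M | ∀ n, M ≤ n → A n = 0}.Nonempty := ⟨N, hN⟩
  have hmem : len A ∈ {M | ∀ n, M ≤ n → A n = 0} := Nat.sInf_mem hne
  refine ⟨hmem, ?_⟩
  intro k hk h0
  have hanti : Antitone A := antitone_nat_of_succ_le hA
  have hup : k ∈ {M | ∀ n, M ≤ n → A n = 0} := by
    intro j hj
    have := hanti hj
    omega
  have : len A ≤ k := Nat.sInf_le hup
  omega

lemma vals_antitone_eq (A : ℕ → ℕ) (hA : ∀ i, A (i+1) ≤ A i) (N : ℕ)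
    (hN : ∀ k, N ≤ k → A k = 0) :
    vals A = (((List.range (len A)).map A : List ℕ) : Multiset ℕ) := by
  have hnz := (len_spec_s15 A hA N hN).2
  show Multiset.filter _ _ = _
  rw [Multiset.filter_coe]
  congr 1
  apply List.filter_eq_self.mpr
  intro x hx
  simp only [List.mem_map, List.mem_range] at hx
  obtain ⟨i, hi, rfl⟩ := hx
  simpa using hnz i hi

lemma len_ind {v : ℕ} (hv : 0 < v) : len (fun k => if k = 0 then v else 0) = 1 := by
  have hne : {M | ∀ n, M ≤ n → (if n = 0 then v else 0) = 0}.Nonempty :=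
    ⟨1, fun n hn => by simp [show n ≠ 0 by omega]⟩
  have h1 : len (fun k => if k = 0 then v else 0) ≤ 1 :=
    Nat.sInf_le (fun n hn => by simp [show n ≠ 0 by omega])
  have h0 : len (fun k => if k = 0 then v else 0) ≠ 0 := by
    intro hc
    have hmem := Nat.sInf_mem hne
    rw [show sInf {M | ∀ n, M ≤ n → (if n = 0 then v else 0) = 0}
        = len (fun k => if k = 0 then v else 0) from rfl, hc] at hmem
    have := hmem 0 (le_refl 0)
    simp at this
    omega
  omega

lemma vals_ind {v : ℕ} (hv : 0 < v) :
    vals (fun k => if k = 0 then v else 0) = {v} := by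
  unfold vals
  rw [len_ind hv]
  simp [Multiset.filter_coe, List.filter, Nat.pos_iff_ne_zero.mp hv]

lemma merge_ind (A : ℕ → ℕ) (hA : ∀ i, A (i+1) ≤ A i) (N : ℕ)
    (hN : ∀ k, N ≤ k → A k = 0) (v : ℕ) (hv0 : 0 < v) (hvA : A 0 ≤ v) :
    (merge A (fun k => if k = 0 then v else 0) 0 = v) ∧
    (∀ i, merge A (fun k => if k = 0 then v else 0) (i+1) = A i) := by
  have hanti : Antitone A := antitone_nat_of_succ_le hA
  set lA : List ℕ := (List.range (len A)).map A with hlA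
  set D : List ℕ := v :: lA with hD
  have hsortedD : D.Pairwise (· ≥ ·) := by
    rw [hD, List.pairwise_cons]
    constructor
    · intro x hx
      rw [hlA] at hx
      simp only [List.mem_map, List.mem_range] at hx
      obtain ⟨i, _, rfl⟩ := hx
      exact le_trans (hanti (Nat.zero_le i)) hvA
    · rw [hlA, List.pairwise_map]
      exact List.pairwise_lt_range.imp (fun h => hanti h.le)
  have hMeq : vals A + vals (fun k => if k = 0 then v else 0) = (D.reverse : Multiset ℕ) := by
    rw [vals_antitone_eq A hA N hN, vals_ind hv0, Multiset.coe_reverse, hD]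
    show (lA : Multiset ℕ) + {v} = v ::ₘ (lA : Multiset ℕ)
    rw [add_comm, ← Multiset.singleton_add]
  have hsortD : (vals A + vals (fun k => if k = 0 then v else 0)).sort (· ≤ ·) = D.reverse := by
    refine (fun hp h1 h2 => List.Perm.eq_of_pairwise' (r := (· ≤ ·)) h1 h2 hp) ?_ ?_ ?_
    · apply Multiset.coe_eq_coe.mp
      rw [Multiset.sort_eq, hMeq]
    · exact Multiset.pairwise_sort _ _
    · show D.reverse.Pairwise (· ≤ ·)
      rw [List.pairwise_reverse]
      exact hsortedD
  have hfun : ∀ i, merge A (fun k => if k = 0 then v else 0) i = D.getD i 0 := by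
    intro i
    simp only [merge]
    rw [hsortD, List.reverse_reverse]
  constructor
  · rw [hfun 0, hD]; rfl
  · intro i
    rw [hfun (i+1), hD, List.getD_cons_succ]
    rcases lt_or_ge i (len A) with h | h
    · have hl : i < lA.length := by rw [hlA]; simpa using h
      rw [List.getD_eq_getElem _ _ hl]
      simp [hlA]
    · have hl : lA.length ≤ i := by rw [hlA]; simpa using h
      rw [List.getD_eq_default _ _ hl]
      exact ((len_spec_s15 A hA N hN).1 i h).symm

lemma part_b (n : ℕ) (hn : 3 ≤ n) :
    ∃ (m : ℕ) (L : List ℕ), 2 ≤ m ∧ m ≤ n - 1 ∧ L.length = m ∧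
      (∀ x ∈ L, 0 < x) ∧ L.sum = n ∧ merge (Y m) (L.map Y).sum = Y n := by
  set t := n / 2 with ht
  set m := (n + 1) / 2 with hm
  refine ⟨m, if n % 2 = 0 then List.replicate t 2 else 1 :: List.replicate t 2,
    by omega, by omega, ?_, ?_, ?_, ?_⟩
  · split_ifs with h <;> simp <;> omega
  · intro x hx
    split_ifs at hx with h
    · rw [List.eq_of_mem_replicate hx]; norm_num
    · rcases List.mem_cons.mp hx with rfl | hx'
      · norm_num
      · rw [List.eq_of_mem_replicate hx']; norm_num
  · split_ifs with h <;> simp [List.sum_replicate] <;> omega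
  · have hSval : ((if n % 2 = 0 then List.replicate t 2 else 1 :: List.replicate t 2).map Y).sum
        = (fun k => if k = 0 then t else 0) := by
      funext k
      rw [S_apply]
      have hrep : ((List.replicate t 2).map (fun j => Y j k)).sum = if k = 0 then t else 0 := by
        rw [List.map_replicate, List.sum_replicate, smul_eq_mul]
        simp only [Y_two]
        split_ifs <;> omega
      by_cases h : n % 2 = 0
      · rw [if_pos h, hrep]
      · rw [if_neg h]
        simp only [List.map_cons, List.sum_cons]
        rw [hrep]
        simp only [Y_one]
        omega
    rw [hSval]
    have hv0 : 0 < t := by omega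
    have hvA : Y m 0 ≤ t := by
      have h1 : Y m 0 ≤ Y n 0 := Y_mono 0 (by omega)
      have h2 : Y n 0 = n / 2 := Y_zero_idx n
      omega
    obtain ⟨hz, hs⟩ := merge_ind (Y m) (Y_antitone m) m (fun k hk => Y_ev_zero hk)
      t hv0 hvA
    funext i
    cases i with
    | zero => rw [hz, Y_zero_idx]
    | succ i => rw [hs i, Y_succ, hm]

/-- `Y 1 = 0`, `Y 2` is a single box, and for `n ≥ 3` the diagram `Y n` is
the lexicographic maximum of `merge (Y m) (Y j₁ ⊕ ⋯ ⊕ Y jₘ)` over all `2 ≤ m ≤ n - 1`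
and lists of positive integers `j₁, …, jₘ` summing to `n`. -/
theorem minimal_box_operad_closed_form :
    Y 1 = (fun _ => 0) ∧
      Y 2 = (fun k => if k = 0 then 1 else 0) ∧
      ∀ n, 3 ≤ n →
        (∀ (m : ℕ) (L : List ℕ), 2 ≤ m → m ≤ n - 1 → L.length = m →
            (∀ x ∈ L, 0 < x) → L.sum = n →
            LexLe (merge (Y m) (L.map Y).sum) (Y n)) ∧
        (∃ (m : ℕ) (L : List ℕ), 2 ≤ m ∧ m ≤ n - 1 ∧ L.length = m ∧
            (∀ x ∈ L, 0 < x) ∧ L.sum = n ∧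
            merge (Y m) (L.map Y).sum = Y n) := by
  refine ⟨Y_one, Y_two, fun n hn => ⟨?_, part_b n hn⟩⟩
  intro m L _ _ hlen hpos hsum
  exact part_a n m L hpos hsum hlen
end
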